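/- arXiv:2406.08944 — 2 statements merged into one kernel-verified Lean document; each statement's English description precedes it below -/
import Mathlib

section
/- For any N : E → ℤ≥0 and any f, g : V → ℤ with Σf = Σg = 0, the number of two-colored oriented configurations on G_N with red source f and blue source g equals the product of the number of all-red oriented configurations on G_N with source f+g and the number of all-blue oriented configurations on G_N with source −f+g: #{∂r = f, ∂b = g}_N = #{∂r = f+g}_N · #{∂b = −f+g}_N. -/
open Finset

/-- A finite multigraph on vertex set `V`: a finite set of distinguishable
strands (edges), each with an unordered pair of distinct endpoints. -/
structure MG (V : Type) where
  Strand : Type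
  [fin : Fintype Strand]
  [dec : DecidableEq Strand]
  ends : Strand → Sym2 V
  noloop : ∀ s, ¬ (ends s).IsDiag

attribute [instance] MG.fin MG.dec

variable {V : Type} [Fintype V] [DecidableEq V]

/-- An oriented (one-colored) configuration on the multigraph `G`. -/
structure Config (G : MG V) where
  orient : G.Strand → V × V
  compat : ∀ s, Sym2.mk (orient s).1 (orient s).2 = G.ends s

/-- A two-colored oriented configuration on the multigraph `G`
(`red s = true` means the strand `s` is red, otherwise it is blue). -/
structure Config2 (G : MG V) where
  orient : G.Strand → V × V
  red : G.Strand → Bool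
  compat : ∀ s, Sym2.mk (orient s).1 (orient s).2 = G.ends s

/-- The current induced by an oriented configuration. -/
def Config.cur {G : MG V} (ω : Config G) (x y : V) : ℕ :=
  (univ.filter fun s => ω.orient s = (x, y)).card

/-- The red current of a two-colored configuration. -/
def Config2.redCur {G : MG V} (ω : Config2 G) (x y : V) : ℕ :=
  (univ.filter fun s => ω.orient s = (x, y) ∧ ω.red s = true).card

/-- The blue current of a two-colored configuration. -/
def Config2.blueCur {G : MG V} (ω : Config2 G) (x y : V) : ℕ :=
  (univ.filter fun s => ω.orient s = (x, y) ∧ ω.red s = false).card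

/-- The source function of a current. -/
def csrc (n : V → V → ℕ) (x : V) : ℤ :=
  ∑ y, ((n x y : ℤ) - n y x)

/-- The bijection `F`: paint everything red keeping orientations for the first
component; reverse red strands and paint everything blue for the second. -/
def F {G : MG V} (ω : Config2 G) : Config G × Config G :=
  (⟨ω.orient, ω.compat⟩,
   ⟨fun s => if ω.red s then (ω.orient s).swap else ω.orient s, by
      intro s
      by_cases h : ω.red s <;> simp [h, ← ω.compat s, Sym2.eq_swap]⟩)

lemma orient_ne_swap {G : MG V} (ω : Config2 G) (s : G.Strand) :
    ω.orient s ≠ (ω.orient s).swap := by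
  intro h
  apply G.noloop s
  rw [← ω.compat s, Sym2.isDiag_iff_proj_eq]
  exact congrArg Prod.fst h

lemma sym2_cases {p q : V × V} (h : Sym2.mk p.1 p.2 = Sym2.mk q.1 q.2) : p = q ∨ p = q.swap := by
  obtain ⟨a, b⟩ := p
  obtain ⟨c, d⟩ := q
  rw [Sym2.eq_iff] at h
  simp only at h
  rcases h with ⟨h1, h2⟩ | ⟨h1, h2⟩
  · left; simp [h1, h2]
  · right; simp [h1, h2]

lemma Config.ext' {G : MG V} {a b : Config G} (h : a.orient = b.orient) :
    a = b := by
  cases a; cases b; cases h; rfl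

lemma Config2.ext' {G : MG V} {a b : Config2 G} (h : a.orient = b.orient)
    (h2 : a.red = b.red) : a = b := by
  cases a; cases b; cases h; cases h2; rfl

/-- `F` as an equivalence. -/
def FEquiv (G : MG V) : Config2 G ≃ Config G × Config G where
  toFun := F
  invFun p := ⟨p.1.orient, fun s => decide (p.2.orient s = (p.1.orient s).swap),
    p.1.compat⟩
  left_inv ω := by
    refine Config2.ext' rfl (funext fun s => ?_)
    show (decide ((if ω.red s then (ω.orient s).swap else ω.orient s)
        = (ω.orient s).swap)) = ω.red s
    by_cases h : ω.red s <;> simp [h, (orient_ne_swap ω s).symm, Ne.symm]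
  right_inv p := by
    refine Prod.ext (Config.ext' rfl) (Config.ext' (funext fun s => ?_))
    show (if decide (p.2.orient s = (p.1.orient s).swap) = true
        then (p.1.orient s).swap else p.1.orient s) = p.2.orient s
    by_cases h : p.2.orient s = (p.1.orient s).swap
    · simp [h]
    · have hc := sym2_cases ((p.2.compat s).trans (p.1.compat s).symm)
      rw [if_neg (by simpa using h)]
      tauto

lemma cur_fst {G : MG V} (ω : Config2 G) (x y : V) :
    (F ω).1.cur x y = ω.redCur x y + ω.blueCur x y := by
  have h := Finset.card_filter_add_card_filter_not
    (s := univ.filter fun s : G.Strand => ω.orient s = (x, y))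
    (p := fun s => ω.red s = true)
  rw [Finset.filter_filter, Finset.filter_filter] at h
  show (univ.filter fun s => ω.orient s = (x, y)).card = _
  rw [← h]
  congr 1
  unfold Config2.blueCur
  congr 1
  apply Finset.filter_congr
  intro s _
  simp

lemma cur_snd {G : MG V} (ω : Config2 G) (x y : V) :
    (F ω).2.cur x y = ω.redCur y x + ω.blueCur x y := by
  have h := Finset.card_filter_add_card_filter_not
    (s := univ.filter fun s : G.Strand =>
      (if ω.red s then (ω.orient s).swap else ω.orient s) = (x, y))
    (p := fun s => ω.red s = true)
  rw [Finset.filter_filter, Finset.filter_filter] at h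
  show (univ.filter fun s =>
      (if ω.red s then (ω.orient s).swap else ω.orient s) = (x, y)).card = _
  rw [← h]
  congr 1
  · unfold Config2.redCur
    congr 1
    apply Finset.filter_congr
    intro s _
    by_cases hr : ω.red s
    · simp only [hr, if_true, and_true]
      rw [Prod.swap_eq_iff_eq_swap]
      rfl
    · simp [hr]
  · unfold Config2.blueCur
    congr 1
    apply Finset.filter_congr
    intro s _
    by_cases hr : ω.red s <;> simp [hr]

lemma csrc_fst {G : MG V} (ω : Config2 G) (x : V) :
    csrc (F ω).1.cur x = csrc ω.redCur x + csrc ω.blueCur x := by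
  unfold csrc
  rw [← Finset.sum_add_distrib]
  apply Finset.sum_congr rfl
  intro y _
  rw [cur_fst, cur_fst]
  push_cast
  ring

lemma csrc_snd {G : MG V} (ω : Config2 G) (x : V) :
    csrc (F ω).2.cur x = -csrc ω.redCur x + csrc ω.blueCur x := by
  unfold csrc
  rw [← Finset.sum_neg_distrib, ← Finset.sum_add_distrib]
  apply Finset.sum_congr rfl
  intro y _
  rw [cur_snd, cur_snd]
  push_cast
  ring

/-- `#{∂r = f, ∂b = g}_N = #{∂r = f+g}_N · #{∂b = −f+g}_N`. -/
theorem card_two_color_eq_mul (G : MG V) (f g : V → ℤ)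
    (hf : ∑ v, f v = 0) (hg : ∑ v, g v = 0) :
    Nat.card {ω : Config2 G //
        (∀ x, csrc ω.redCur x = f x) ∧ (∀ x, csrc ω.blueCur x = g x)} =
      Nat.card {ω : Config G // ∀ x, csrc ω.cur x = f x + g x} *
      Nat.card {ω : Config G // ∀ x, csrc ω.cur x = -f x + g x} := by
  have key : ∀ ω : Config2 G,
      ((∀ x, csrc ω.redCur x = f x) ∧ (∀ x, csrc ω.blueCur x = g x)) ↔
      ((∀ x, csrc (F ω).1.cur x = f x + g x) ∧
       (∀ x, csrc (F ω).2.cur x = -f x + g x)) := by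
    intro ω
    constructor
    · rintro ⟨h1, h2⟩
      exact ⟨fun x => by rw [csrc_fst, h1, h2],
             fun x => by rw [csrc_snd, h1, h2]⟩
    · rintro ⟨h1, h2⟩
      constructor <;> intro x
      · have a1 := h1 x; have a2 := h2 x
        rw [csrc_fst] at a1; rw [csrc_snd] at a2
        linarith
      · have a1 := h1 x; have a2 := h2 x
        rw [csrc_fst] at a1; rw [csrc_snd] at a2
        linarith
  have e1 : {ω : Config2 G //
      (∀ x, csrc ω.redCur x = f x) ∧ (∀ x, csrc ω.blueCur x = g x)} ≃
      {p : Config G × Config G //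
        (∀ x, csrc p.1.cur x = f x + g x) ∧ (∀ x, csrc p.2.cur x = -f x + g x)} :=
    Equiv.subtypeEquiv (FEquiv G) key
  have e2 := Equiv.subtypeProdEquivProd
    (p := fun ω : Config G => ∀ x, csrc ω.cur x = f x + g x)
    (q := fun ω : Config G => ∀ x, csrc ω.cur x = -f x + g x)
  rw [Nat.card_congr (e1.trans e2), Nat.card_prod]
end

section
/- For any φ : V → ℤ, the XY model correlation function satisfies Z·⟨σ^φ⟩ = Σ_{n : ∂n = −φ} w_J(n) = Σ_{n : ∂n = φ} w_J(n), where σ^φ = Π_x σ_x^{φ_x} and w_J(n) = Π (J_xy/2)^{n_{xy}}/n_{xy}!. -/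
open Finset MeasureTheory Real

variable {V : Type} [Fintype V] [DecidableEq V]

/-- The box `[0, 2π)^V` of angle configurations. -/
def box (V : Type) [Fintype V] : Set (V → ℝ) :=
  Set.univ.pi fun _ => Set.Ico 0 (2 * Real.pi)

/-- Minus the Hamiltonian of the XY model, in angle variables:
`−H(θ) = Σ_{xy∈E} J_xy cos(θ_x − θ_y)`, written as a sum over ordered pairs
(with `J` symmetric and `J x y = 0` if `xy` is not an edge). -/
noncomputable def energy (J : V → V → ℝ) (θ : V → ℝ) : ℝ :=
  (∑ x, ∑ y, J x y * Real.cos (θ x - θ y)) / 2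

/-- The partition function of the XY model:
`Z = ∫_{(S¹)^V} e^{−H} dσ` with `dσ` the uniform probability measure. -/
noncomputable def Z (J : V → V → ℝ) : ℝ :=
  (∫ θ in box V, Real.exp (energy J θ)) / (2 * Real.pi) ^ (Fintype.card V)

/-- The unnormalized correlation `Z·⟨σ^φ⟩ = ∫ Π_x σ_x^{φ_x} e^{−H} dσ`,
where `σ_x = e^{iθ_x}`. -/
noncomputable def U (J : V → V → ℝ) (φ : V → ℤ) : ℂ :=
  (∫ θ in box V,
      Complex.exp (Complex.I * ∑ x, (φ x : ℂ) * (θ x : ℂ)) * Real.exp (energy J θ)) /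
    ((2 * Real.pi : ℂ)) ^ (Fintype.card V)

/-- The correlation function `⟨σ^φ⟩ = Z·⟨σ^φ⟩ / Z`. -/
noncomputable def corr (J : V → V → ℝ) (φ : V → ℤ) : ℂ :=
  U J φ / (Z J : ℂ)

/-- The weight `w_J(n) = Π_{oriented edges} (J_xy/2)^{n_xy} / n_xy!` of a
current `n` (oriented edges are ordered pairs; pairs with `J x y = 0` or
`x = y` carry no weight unless `n` vanishes there). -/
noncomputable def wgt (J : V → V → ℝ) (n : V → V → ℕ) : ℝ :=
  ∏ x, ∏ y, (J x y / 2) ^ (n x y) / (n x y).factorial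

set_option maxHeartbeats 1000000
open scoped ENNReal NNReal

lemma prod_tsum_fin : ∀ (N : ℕ) (f : Fin N → ℕ → ℂ),
    (∀ i, Summable fun k => ‖f i k‖) →
    Summable (fun g : Fin N → ℕ => ‖∏ i, f i (g i)‖) ∧
      HasSum (fun g : Fin N → ℕ => ∏ i, f i (g i)) (∏ i, ∑' k, f i k) := by
  intro N
  induction N with
  | zero =>
    intro f hf
    constructor
    · simpa using summable_of_finite_support (Set.toFinite _)
    · simpa using hasSum_single (f := fun _ : Fin 0 → ℕ => (1:ℂ)) default
        (by intro b hb; exact absurd (Subsingleton.elim b default) hb)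
  | succ n ih =>
    intro f hf
    obtain ⟨hs, hS⟩ := ih (fun i => f i.succ) (fun i => hf i.succ)
    have key : ∀ p : ℕ × (Fin n → ℕ),
        (∏ i, f i ((Fin.consEquiv (fun _ => ℕ)) p i)) = f 0 p.1 * ∏ i, f i.succ (p.2 i) := by
      intro p
      rw [Fin.prod_univ_succ]
      simp
    constructor
    · rw [← (Fin.consEquiv (fun _ => ℕ)).summable_iff]
      have h2 : Summable fun p : ℕ × (Fin n → ℕ) => ‖f 0 p.1‖ * ‖∏ i, f i.succ (p.2 i)‖ :=
        by apply Summable.mul_of_nonneg (hf 0) hs (fun k => norm_nonneg _) (fun g => norm_nonneg _)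
      apply h2.congr
      intro p
      simp only [Function.comp_apply, key p, norm_mul]
    · rw [Fin.prod_univ_succ, ← (Fin.consEquiv (fun _ => ℕ)).hasSum_iff]
      have hsum : Summable fun p : ℕ × (Fin n → ℕ) => f 0 p.1 * ∏ i, f i.succ (p.2 i) := by
        apply summable_mul_of_summable_norm (hf 0) hs
      have hmul := hsum.hasSum
      rw [← tsum_mul_tsum_of_summable_norm (hf 0) hs, hS.tsum_eq] at hmul
      have heq : ((fun g : Fin (n+1) → ℕ => ∏ i, f i (g i)) ∘ (Fin.consEquiv (fun _ => ℕ)))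
          = fun p : ℕ × (Fin n → ℕ) => f 0 p.1 * ∏ i, f i.succ (p.2 i) := funext key
      rw [heq]
      exact hmul

lemma prod_tsum_fintype {ι : Type} [Fintype ι] (f : ι → ℕ → ℂ)
    (hf : ∀ i, Summable fun k => ‖f i k‖) :
    Summable (fun g : ι → ℕ => ‖∏ i, f i (g i)‖) ∧
      HasSum (fun g : ι → ℕ => ∏ i, f i (g i)) (∏ i, ∑' k, f i k) := by
  classical
  set N := Fintype.card ι
  set e : Fin N ≃ ι := (Fintype.equivFin ι).symm with he
  set E : (ι → ℕ) ≃ (Fin N → ℕ) := Equiv.arrowCongr e.symm (Equiv.refl ℕ) with hE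
  obtain ⟨hs, hS⟩ := prod_tsum_fin N (fun j => f (e j)) (fun j => hf (e j))
  have key : ∀ g : ι → ℕ, (∏ j, f (e j) ((E g) j)) = ∏ i, f i (g i) := by
    intro g
    rw [← e.prod_comp (fun i => f i (g i))]
    apply Finset.prod_congr rfl
    intro j _
    simp [hE, Equiv.arrowCongr]
  have hprod : (∏ j, ∑' k, f (e j) k) = ∏ i, ∑' k, f i k :=
    e.prod_comp (fun i => ∑' k, f i k)
  have hG : (fun g : ι → ℕ => ∏ i, f i (g i))
      = (fun h : Fin N → ℕ => ∏ j, f (e j) (h j)) ∘ E := by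
    funext g
    exact (key g).symm
  constructor
  · rw [show (fun g : ι → ℕ => ‖∏ i, f i (g i)‖)
        = (fun h : Fin N → ℕ => ‖∏ j, f (e j) (h j)‖) ∘ E by
      funext g; simp only [Function.comp_apply, key g]]
    exact E.summable_iff.mpr hs
  · rw [hG, ← hprod]
    exact E.hasSum_iff.mpr hS

/-- The elementary factor of the expansion. -/
noncomputable def afac (J : V → V → ℝ) (θ : V → ℝ) (p : V × V) : ℂ :=
  ((J p.1 p.2 / 2 : ℝ) : ℂ) * Complex.exp (((θ p.1 - θ p.2 : ℝ) : ℂ) * Complex.I)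

lemma norm_afac (J : V → V → ℝ) (hpos : ∀ x y, 0 ≤ J x y) (θ : V → ℝ) (p : V × V) :
    ‖afac J θ p‖ = J p.1 p.2 / 2 := by
  rw [afac, norm_mul]
  simp [Complex.norm_exp,
    abs_of_nonneg (div_nonneg (hpos p.1 p.2) (by norm_num : (0:ℝ) ≤ 2)), abs_of_nonneg (hpos p.1 p.2)]

lemma energy_complex (J : V → V → ℝ) (hsym : ∀ x y, J x y = J y x) (θ : V → ℝ) :
    ((energy J θ : ℝ) : ℂ) = ∑ p : V × V, afac J θ p := by
  have hS2 : (∑ p : V × V, afac J θ p)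
      = ∑ x, ∑ y, ((J x y / 2 : ℝ) : ℂ) * Complex.exp (-(((θ x - θ y : ℝ) : ℂ)) * Complex.I) := by
    rw [Fintype.sum_prod_type, Finset.sum_comm]
    refine Finset.sum_congr rfl fun x _ => Finset.sum_congr rfl fun y _ => ?_
    rw [afac]
    simp only
    rw [hsym y x]
    congr 2
    push_cast
    ring
  have hS1 : (∑ p : V × V, afac J θ p)
      = ∑ x, ∑ y, ((J x y / 2 : ℝ) : ℂ) * Complex.exp ((((θ x - θ y : ℝ) : ℂ)) * Complex.I) := by
    rw [Fintype.sum_prod_type]; rfl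
  have h2 : (∑ p : V × V, afac J θ p) + (∑ p : V × V, afac J θ p)
      = ∑ x, ∑ y, ((J x y : ℝ) : ℂ) * Complex.cos ((θ x - θ y : ℝ) : ℂ) := by
    nth_rewrite 1 [hS1]
    nth_rewrite 1 [hS2]
    rw [← Finset.sum_add_distrib]
    refine Finset.sum_congr rfl fun x _ => ?_
    rw [← Finset.sum_add_distrib]
    refine Finset.sum_congr rfl fun y _ => ?_
    have h := Complex.two_cos (x := ((θ x - θ y : ℝ) : ℂ))
    push_cast at h ⊢
    linear_combination (-(J x y : ℂ) / 2) * h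
  have henergy : ((energy J θ : ℝ) : ℂ)
      = (∑ x, ∑ y, ((J x y : ℝ) : ℂ) * Complex.cos ((θ x - θ y : ℝ) : ℂ)) / 2 := by
    rw [energy]
    push_cast [Complex.ofReal_cos]
    ring
  rw [henergy, ← h2]
  ring

/-- The term of the current expansion. -/
noncomputable def cterm (J : V → V → ℝ) (φ : V → ℤ) (n : V → V → ℕ) (θ : V → ℝ) : ℂ :=
  ((wgt J n : ℝ) : ℂ) *
    Complex.exp (((∑ x, (((φ x + csrc n x : ℤ) : ℝ)) * θ x : ℝ) : ℂ) * Complex.I)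

lemma norm_cterm (J : V → V → ℝ) (hpos : ∀ x y, 0 ≤ J x y) (φ : V → ℤ) (n : V → V → ℕ)
    (θ : V → ℝ) : ‖cterm J φ n θ‖ = wgt J n := by
  have hw : 0 ≤ wgt J n := by
    apply Finset.prod_nonneg
    intro x _
    apply Finset.prod_nonneg
    intro y _
    exact div_nonneg (pow_nonneg (div_nonneg (hpos x y) (by norm_num)) _) (Nat.cast_nonneg _)
  rw [cterm, norm_mul]
  simp [Complex.norm_exp, abs_of_nonneg hw]

lemma csrc_real (n : V → V → ℕ) (θ : V → ℝ) :
    (∑ x, ∑ y, (n x y : ℝ) * (θ x - θ y)) = ∑ x, (csrc n x : ℝ) * θ x := by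
  have hc : ∀ x, (csrc n x : ℝ) = ∑ y, ((n x y : ℝ) - n y x) := by
    intro x
    rw [csrc]
    push_cast
    rfl
  simp_rw [hc, Finset.sum_mul, sub_mul, mul_sub, Finset.sum_sub_distrib]
  congr 1
  exact Finset.sum_comm

lemma cterm_eq (J : V → V → ℝ) (φ : V → ℤ) (n : V → V → ℕ) (θ : V → ℝ) :
    Complex.exp (Complex.I * ∑ x, (φ x : ℂ) * (θ x : ℂ)) *
      ∏ p : V × V, (afac J θ p) ^ (n p.1 p.2) / (n p.1 p.2).factorial
      = cterm J φ n θ := by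
  have h1 : ∀ p : V × V, (afac J θ p) ^ (n p.1 p.2) / (n p.1 p.2).factorial
      = (((J p.1 p.2 / 2 : ℝ) : ℂ) ^ (n p.1 p.2) / (n p.1 p.2).factorial) *
        Complex.exp ((((n p.1 p.2 : ℝ) * (θ p.1 - θ p.2) : ℝ) : ℂ) * Complex.I) := by
    intro p
    rw [afac, mul_pow, ← Complex.exp_nat_mul]
    push_cast
    ring
  simp_rw [h1, Finset.prod_mul_distrib]
  rw [← Complex.exp_sum, ← Finset.sum_mul]
  have h2 : (∑ p : V × V, ((((n p.1 p.2 : ℝ) * (θ p.1 - θ p.2) : ℝ)) : ℂ))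
      = (((∑ x, (csrc n x : ℝ) * θ x : ℝ)) : ℂ) := by
    rw [← Complex.ofReal_sum]
    congr 1
    rw [← csrc_real n θ, Fintype.sum_prod_type]
  rw [h2]
  have h3 : (∏ p : V × V, (((J p.1 p.2 / 2 : ℝ) : ℂ) ^ (n p.1 p.2) / (n p.1 p.2).factorial))
      = ((wgt J n : ℝ) : ℂ) := by
    rw [wgt, Fintype.prod_prod_type]
    push_cast
    rfl
  rw [h3, cterm]
  have h4 : (∑ x, (((φ x + csrc n x : ℤ) : ℝ)) * θ x)
      = (∑ x, (φ x : ℝ) * θ x) + ∑ x, (csrc n x : ℝ) * θ x := by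
    rw [← Finset.sum_add_distrib]
    congr 1
    funext x
    push_cast
    ring
  have h5 : (∑ x, (φ x : ℂ) * (θ x : ℂ)) = (((∑ x, (φ x : ℝ) * θ x : ℝ)) : ℂ) := by
    push_cast
    rfl
  have h45 : Complex.exp (Complex.I * ∑ x, (φ x : ℂ) * (θ x : ℂ)) *
      Complex.exp ((((∑ x, (csrc n x : ℝ) * θ x : ℝ)) : ℂ) * Complex.I)
      = Complex.exp ((((∑ x, (((φ x + csrc n x : ℤ) : ℝ)) * θ x : ℝ)) : ℂ) * Complex.I) := by
    rw [← Complex.exp_add]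
    congr 1
    rw [h4, h5, Complex.ofReal_add]
    ring
  rw [← h45]
  ring

lemma hasSum_cterm (J : V → V → ℝ) (hsym : ∀ x y, J x y = J y x) (hpos : ∀ x y, 0 ≤ J x y)
    (φ : V → ℤ) (θ : V → ℝ) :
    HasSum (fun n : V → V → ℕ => cterm J φ n θ)
      (Complex.exp (Complex.I * ∑ x, (φ x : ℂ) * (θ x : ℂ)) * Real.exp (energy J θ)) := by
  set f : V × V → ℕ → ℂ := fun p k => (afac J θ p) ^ k / k.factorial with hfdef
  have hf : ∀ p, Summable fun k => ‖f p k‖ := by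
    intro p
    apply (Real.summable_pow_div_factorial ‖afac J θ p‖).congr
    intro k
    rw [hfdef]
    simp [norm_div, norm_pow]
  obtain ⟨hns, hhs⟩ := prod_tsum_fintype f hf
  have hexp : (∏ p : V × V, ∑' k, f p k) = ((Real.exp (energy J θ) : ℝ) : ℂ) := by
    have : ∀ p : V × V, (∑' k, f p k) = Complex.exp (afac J θ p) := by
      intro p
      rw [Complex.exp_eq_exp_ℂ, NormedSpace.exp_eq_tsum_div]
    simp_rw [this]
    rw [← Complex.exp_sum, Complex.ofReal_exp, energy_complex J hsym θ]
  rw [hexp] at hhs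
  have hhs2 : HasSum (fun m : V → V → ℕ => ∏ p : V × V, f p (m p.1 p.2))
      (((Real.exp (energy J θ) : ℝ)) : ℂ) := by
    have := ((Equiv.curry V V ℕ).symm.hasSum_iff
      (f := fun g : V × V → ℕ => ∏ p, f p (g p))
      (a := ((Real.exp (energy J θ) : ℝ) : ℂ))).mpr hhs
    exact this
  have := hhs2.mul_left (Complex.exp (Complex.I * ∑ x, (φ x : ℂ) * (θ x : ℂ)))
  exact this.congr_fun fun m => (cterm_eq J φ m θ).symm

lemma integral_phase (m : ℤ) :
    (∫ t in Set.Ico (0:ℝ) (2*π), Complex.exp ((((m : ℝ) * t : ℝ) : ℂ) * Complex.I))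
      = if m = 0 then ((2*π : ℝ) : ℂ) else 0 := by
  by_cases hm : m = 0
  · subst hm
    simp only [Int.cast_zero, zero_mul, Complex.ofReal_zero, Complex.exp_zero, if_true]
    rw [setIntegral_const]
    simp [Real.volume_Ico, Real.pi_pos.le]
  · rw [if_neg hm]
    have hrw : ∀ t : ℝ, Complex.exp ((((m : ℝ) * t : ℝ) : ℂ) * Complex.I)
        = Complex.exp (((m : ℂ) * Complex.I) * t) := by
      intro t
      congr 1
      push_cast
      ring
    simp_rw [hrw]
    rw [integral_Ico_eq_integral_Ioo, ← integral_Ioc_eq_integral_Ioo,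
      ← intervalIntegral.integral_of_le (by positivity : (0:ℝ) ≤ 2*π)]
    have hc : (m : ℂ) * Complex.I ≠ 0 :=
      mul_ne_zero (Int.cast_ne_zero.mpr hm) Complex.I_ne_zero
    rw [integral_exp_mul_complex hc]
    have h2 : ((m : ℂ) * Complex.I) * ((2*π : ℝ) : ℂ) = (m : ℂ) * (2 * (π:ℂ) * Complex.I) := by
      push_cast
      ring
    rw [h2, Complex.exp_int_mul_two_pi_mul_I]
    simp

lemma measurableSet_box : MeasurableSet (box V) :=
  MeasurableSet.univ_pi fun _ => measurableSet_Ico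

lemma integral_cterm (J : V → V → ℝ) (φ : V → ℤ) (n : V → V → ℕ) :
    (∫ θ in box V, cterm J φ n θ)
      = ((wgt J n : ℝ) : ℂ) *
        ∏ x, (if (φ x + csrc n x : ℤ) = 0 then ((2*π : ℝ) : ℂ) else 0) := by
  set F : V → ℝ → ℂ :=
    fun x t => Complex.exp (((((φ x + csrc n x : ℤ) : ℝ) * t : ℝ) : ℂ) * Complex.I) with hF
  have hfac : ∀ θ : V → ℝ, cterm J φ n θ = ((wgt J n : ℝ) : ℂ) * ∏ x, F x (θ x) := by
    intro θ
    rw [cterm]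
    congr 1
    rw [← Complex.exp_sum]
    congr 1
    rw [← Finset.sum_mul, ← Complex.ofReal_sum]
  simp_rw [hfac]
  rw [integral_const_mul]
  congr 1
  have hind : ∀ θ : V → ℝ, (box V).indicator (fun θ => ∏ x, F x (θ x)) θ
      = ∏ x, (Set.Ico (0:ℝ) (2*π)).indicator (F x) (θ x) := by
    intro θ
    by_cases hθ : θ ∈ box V
    · rw [Set.indicator_of_mem hθ]
      refine Finset.prod_congr rfl fun x _ => ?_
      rw [Set.indicator_of_mem (hθ x (Set.mem_univ x))]
    · rw [Set.indicator_of_notMem hθ]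
      have hx : ∃ x, θ x ∉ Set.Ico (0:ℝ) (2*π) := by
        by_contra hcon
        push_neg at hcon
        exact hθ fun x _ => hcon x
      obtain ⟨x, hx⟩ := hx
      exact (Finset.prod_eq_zero (Finset.mem_univ x)
        (by rw [Set.indicator_of_notMem hx])).symm
  rw [← MeasureTheory.integral_indicator measurableSet_box]
  simp_rw [hind]
  rw [MeasureTheory.integral_fintype_prod_volume_eq_prod
    (fun x => (Set.Ico (0:ℝ) (2*π)).indicator (F x))]
  refine Finset.prod_congr rfl fun x _ => ?_
  rw [MeasureTheory.integral_indicator measurableSet_Ico]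
  exact integral_phase (φ x + csrc n x)

lemma summable_wgt (J : V → V → ℝ) (hpos : ∀ x y, 0 ≤ J x y) :
    Summable (fun n : V → V → ℕ => wgt J n) := by
  have hf : ∀ p : V × V, Summable fun k => ‖(afac J (0 : V → ℝ) p) ^ k / (k.factorial : ℂ)‖ := by
    intro p
    apply (Real.summable_pow_div_factorial ‖afac J (0 : V → ℝ) p‖).congr
    intro k
    simp [norm_div, norm_pow]
  obtain ⟨hns, _⟩ := prod_tsum_fintype (fun p k => (afac J (0 : V → ℝ) p) ^ k / k.factorial) hf
  have key : ∀ g : V × V → ℕ,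
      ‖∏ p : V × V, (afac J (0 : V → ℝ) p) ^ (g p) / ((g p).factorial : ℂ)‖
        = wgt J (fun x y => g (x, y)) := by
    intro g
    rw [norm_prod, wgt, Fintype.prod_prod_type]
    refine Finset.prod_congr rfl fun x _ => Finset.prod_congr rfl fun y _ => ?_
    rw [norm_div, norm_pow, norm_afac J hpos]
    simp
  have h2 : Summable fun g : V × V → ℕ => wgt J (fun x y => g (x, y)) :=
    hns.congr fun g => key g
  have h3 := ((Equiv.curry V V ℕ).symm).summable_iff.mpr h2
  apply h3.congr
  intro n
  rfl

theorem current_representation_aux (J : V → V → ℝ)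
    (hsym : ∀ x y, J x y = J y x) (hpos : ∀ x y, 0 ≤ J x y)
    (hdiag : ∀ x, J x x = 0) (φ : V → ℤ) :
    (∫ θ in box V,
      Complex.exp (Complex.I * ∑ x, (φ x : ℂ) * (θ x : ℂ)) * Real.exp (energy J θ)) /
    ((2 * Real.pi : ℂ)) ^ (Fintype.card V)
      = ((∑' n : {n : V → V → ℕ // ∀ x, csrc n x = -φ x}, wgt J n.1 : ℝ) : ℂ) ∧
    (∫ θ in box V,
      Complex.exp (Complex.I * ∑ x, (φ x : ℂ) * (θ x : ℂ)) * Real.exp (energy J θ)) /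
    ((2 * Real.pi : ℂ)) ^ (Fintype.card V)
      = ((∑' n : {n : V → V → ℕ // ∀ x, csrc n x = φ x}, wgt J n.1 : ℝ) : ℂ) := by
  classical
  set N := Fintype.card V with hN
  -- pointwise expansion
  have hpt : ∀ θ : V → ℝ,
      Complex.exp (Complex.I * ∑ x, (φ x : ℂ) * (θ x : ℂ)) * Real.exp (energy J θ)
        = ∑' n : V → V → ℕ, cterm J φ n θ :=
    fun θ => (hasSum_cterm J hsym hpos φ θ).tsum_eq.symm
  have hwsum := summable_wgt J hpos
  have hwnn : ∀ n, 0 ≤ wgt J n := by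
    intro n
    apply Finset.prod_nonneg
    intro x _
    apply Finset.prod_nonneg
    intro y _
    exact div_nonneg (pow_nonneg (div_nonneg (hpos x y) (by norm_num)) _) (Nat.cast_nonneg _)
  -- interchange of sum and integral
  have hcont : ∀ n : V → V → ℕ, Continuous (cterm J φ n) := by
    intro n
    apply Continuous.mul continuous_const
    apply Complex.continuous_exp.comp
    apply Continuous.mul ?_ continuous_const
    apply Complex.continuous_ofReal.comp
    exact continuous_finset_sum _ fun x _ => continuous_const.mul (continuous_apply x)
  have hvol : (volume (box V)) = ENNReal.ofReal (2*π) ^ N := by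
    rw [show box V = Set.univ.pi fun _ : V => Set.Ico (0:ℝ) (2*π) from rfl, volume_pi_pi]
    simp [Real.volume_Ico, hN, Finset.card_univ]
  have hnnsum : Summable fun n : V → V → ℕ => ‖wgt J n‖₊ := by
    rw [← NNReal.summable_coe]
    apply hwsum.congr
    intro n
    rw [coe_nnnorm, Real.norm_eq_abs, abs_of_nonneg (hwnn n)]
  have hlint : ∀ n : V → V → ℕ,
      (∫⁻ θ in box V, ‖cterm J φ n θ‖₊) = (‖wgt J n‖₊ : ℝ≥0∞) * volume (box V) := by
    intro n
    have hc : ∀ θ : V → ℝ, (‖cterm J φ n θ‖₊ : ℝ≥0∞) = (‖wgt J n‖₊ : ℝ≥0∞) := by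
      intro θ
      congr 1
      ext
      rw [coe_nnnorm, coe_nnnorm, norm_cterm J hpos, Real.norm_eq_abs, abs_of_nonneg (hwnn n)]
    simp_rw [hc]
    rw [lintegral_const, Measure.restrict_apply_univ]
  have hswap : (∫ θ in box V,
      Complex.exp (Complex.I * ∑ x, (φ x : ℂ) * (θ x : ℂ)) * Real.exp (energy J θ))
        = ∑' n : V → V → ℕ, ∫ θ in box V, cterm J φ n θ := by
    rw [show (fun θ : V → ℝ =>
        Complex.exp (Complex.I * ∑ x, (φ x : ℂ) * (θ x : ℂ)) * (Real.exp (energy J θ) : ℂ))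
        = fun θ => ∑' n : V → V → ℕ, cterm J φ n θ from funext hpt]
    apply integral_tsum (fun n => (hcont n).aestronglyMeasurable)
    simp_rw [enorm_eq_nnnorm, hlint]
    rw [ENNReal.tsum_mul_right]
    apply ENNReal.mul_ne_top
    · exact ENNReal.tsum_coe_ne_top_iff_summable.mpr hnnsum
    · rw [hvol]
      exact ENNReal.pow_ne_top ENNReal.ofReal_ne_top
  -- evaluate the integrals
  have hval : ∀ n : V → V → ℕ, (∫ θ in box V, cterm J φ n θ)
      = (if (∀ x, csrc n x = -φ x) then ((wgt J n : ℝ) : ℂ) * ((2*π : ℝ) : ℂ) ^ N else 0) := by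
    intro n
    rw [integral_cterm J φ n]
    by_cases h : ∀ x, csrc n x = -φ x
    · rw [if_pos h]
      congr 1
      rw [Finset.prod_congr rfl (fun x _ => if_pos (by rw [h x]; ring))]
      rw [Finset.prod_const, Finset.card_univ, hN]
    · rw [if_neg h]
      push_neg at h
      obtain ⟨x, hx⟩ := h
      have hz : (∏ x, if (φ x + csrc n x : ℤ) = 0 then ((2*π : ℝ) : ℂ) else 0) = 0 :=
        Finset.prod_eq_zero (Finset.mem_univ x)
          (if_neg (fun hc => hx (by omega)))
      rw [hz, mul_zero]
  -- sum over the subtype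
  have hsub : (∑' n : V → V → ℕ,
        (if (∀ x, csrc n x = -φ x) then ((wgt J n : ℝ) : ℂ) * ((2*π : ℝ) : ℂ) ^ N else 0))
      = ((∑' n : {n : V → V → ℕ // ∀ x, csrc n x = -φ x}, wgt J n.1 : ℝ) : ℂ)
          * ((2*π : ℝ) : ℂ) ^ N := by
    set G : (V → V → ℕ) → ℂ := fun n =>
      (if (∀ x, csrc n x = -φ x) then ((wgt J n : ℝ) : ℂ) * ((2*π : ℝ) : ℂ) ^ N else 0) with hG
    have hsupp : Function.support G ⊆ {n : V → V → ℕ | ∀ x, csrc n x = -φ x} := by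
      intro n hn
      by_contra hcon
      exact hn (if_neg fun h => hcon h)
    rw [← tsum_subtype_eq_of_support_subset hsupp]
    have hterm : ∀ n : {n : V → V → ℕ // ∀ x, csrc n x = -φ x},
        G n.1 = ((wgt J n.1 : ℝ) : ℂ) * ((2*π : ℝ) : ℂ) ^ N := by
      intro n
      exact if_pos n.2
    have h2 : (∑' x : ↑{n : V → V → ℕ | ∀ x, csrc n x = -φ x}, G x.1)
        = ∑' x : {n : V → V → ℕ // ∀ x, csrc n x = -φ x},
            (((wgt J x.1 * (2*π) ^ N : ℝ)) : ℂ) := by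
      refine tsum_congr fun n => ?_
      rw [hterm n]
      push_cast
      ring
    have hsum_sub : Summable fun x : {n : V → V → ℕ // ∀ x, csrc n x = -φ x} => wgt J x.1 :=
      hwsum.subtype _
    rw [h2, ← Complex.ofReal_tsum, hsum_sub.tsum_mul_right ((2*π) ^ N)]
    push_cast
    ring
  have hC : ((2*π : ℝ) : ℂ) ^ N ≠ 0 :=
    pow_ne_zero _ (Complex.ofReal_ne_zero.mpr (by positivity))
  have hU1 : (∫ θ in box V,
      Complex.exp (Complex.I * ∑ x, (φ x : ℂ) * (θ x : ℂ)) * Real.exp (energy J θ)) /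
      ((2 * Real.pi : ℂ)) ^ N
        = ((∑' n : {n : V → V → ℕ // ∀ x, csrc n x = -φ x}, wgt J n.1 : ℝ) : ℂ) := by
    rw [hswap, tsum_congr hval, hsub]
    rw [show ((2 * Real.pi : ℂ)) = (((2*π : ℝ)) : ℂ) by push_cast; ring]
    exact mul_div_cancel_right₀ _ hC
  constructor
  · exact hU1
  · rw [hU1]
    norm_cast
    -- transpose bijection
    have hcsrcT : ∀ (n : V → V → ℕ) (x : V), csrc (fun a b => n b a) x = -csrc n x := by
      intro n x
      rw [csrc, csrc, ← Finset.sum_neg_distrib]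
      exact Finset.sum_congr rfl fun y _ => by ring
    have hwgtT : ∀ n : V → V → ℕ, wgt J (fun a b => n b a) = wgt J n := by
      intro n
      rw [wgt, wgt, Finset.prod_comm]
      exact Finset.prod_congr rfl fun x _ => Finset.prod_congr rfl fun y _ => by rw [hsym y x]
    let e2 : {n : V → V → ℕ // ∀ x, csrc n x = -φ x} ≃ {n : V → V → ℕ // ∀ x, csrc n x = φ x} :=
      { toFun := fun n => ⟨fun a b => n.1 b a, fun x => by rw [hcsrcT n.1 x, n.2 x]; ring⟩
        invFun := fun n => ⟨fun a b => n.1 b a, fun x => by rw [hcsrcT n.1 x, n.2 x]⟩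
        left_inv := fun n => rfl
        right_inv := fun n => rfl }
    rw [← e2.tsum_eq (fun m => wgt J m.1)]
    exact tsum_congr fun a => (hwgtT a.1).symm

/-- Random current representation of correlation functions:
`Z·⟨σ^φ⟩ = Σ_{∂n = −φ} w_J(n) = Σ_{∂n = φ} w_J(n)`. -/
theorem current_representation (J : V → V → ℝ)
    (hsym : ∀ x y, J x y = J y x) (hpos : ∀ x y, 0 ≤ J x y)
    (hdiag : ∀ x, J x x = 0) (φ : V → ℤ) :
    U J φ = ((∑' n : {n : V → V → ℕ // ∀ x, csrc n x = -φ x}, wgt J n.1 : ℝ) : ℂ) ∧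
    U J φ = ((∑' n : {n : V → V → ℕ // ∀ x, csrc n x = φ x}, wgt J n.1 : ℝ) : ℂ) := by
  exact current_representation_aux J hsym hpos hdiag φ
end
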